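/- arXiv:1810.04065 — 2 statements merged into one kernel-verified Lean document; each statement's English description precedes it below -/
import Mathlib

section
/- Toy model standard accuracy: Let Y be uniform on {±1}, and conditionally on Y let X ∈ ℝᵖ have first coordinate X¹ = Y with probability 0.7 and −Y with probability 0.3, and independent coordinates Xʲ ∼ N(ηY, 1) for j = 2,…,p. Let w = (0, 1/(p−1), …, 1/(p−1)) and h(x) = sign(wᵀx). Then P(h(X) = Y) ≥ 1 − exp(−(p−1)η²/2). In particular, for δ ∈ (0,1], if η ≥ √(2·log(1/δ)/(p−1)) then the accuracy is at least 1 − δ. -/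
open MeasureTheory ProbabilityTheory
open scoped ENNReal

lemma lintegral_pi_prod : ∀ {n : ℕ} (μ : Fin n → Measure ℝ), (∀ i, SigmaFinite (μ i)) →
    ∀ (f : Fin n → ℝ → ℝ≥0∞), (∀ i, Measurable (f i)) →
    ∫⁻ x : Fin n → ℝ, ∏ i, f i (x i) ∂Measure.pi μ = ∏ i, ∫⁻ x, f i x ∂(μ i) := by
  intro n
  induction n with
  | zero =>
    intro μ _ f _
    simp [Measure.pi_of_empty]
  | succ n ih =>
    intro μ hσ f hf
    haveI : ∀ i, SigmaFinite (μ i) := hσ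
    have hmeas : Measurable (fun x : Fin (n+1) → ℝ => ∏ i, f i (x i)) :=
      Finset.measurable_prod _ fun i _ => (hf i).comp (measurable_pi_apply i)
    rw [← ((measurePreserving_piFinSuccAbove μ 0).symm).lintegral_comp hmeas]
    simp_rw [MeasurableEquiv.piFinSuccAbove_symm_apply, Fin.insertNthEquiv,
      Equiv.coe_fn_mk, Fin.insertNth_zero, Fin.prod_univ_succ, Fin.cons_zero, Fin.cons_succ,
      Fin.zero_succAbove, cast_eq]
    rw [lintegral_prod_mul (f := f 0) (g := fun y : Fin n → ℝ => ∏ i, f i.succ (y i))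
      ((hf 0).aemeasurable)
      (Measurable.aemeasurable (Finset.measurable_prod Finset.univ
        (fun i _ => by exact (hf i.succ).comp (measurable_pi_apply i))))]
    rw [ih _ (fun i => hσ _) _ (fun i => hf _)]

lemma gaussianPDFReal_mul_exp (m c x : ℝ) :
    gaussianPDFReal m 1 x * Real.exp (c * x)
      = Real.exp (c * m + c ^ 2 / 2) * gaussianPDFReal (m + c) 1 x := by
  simp only [gaussianPDFReal, NNReal.coe_one, mul_one]
  rw [mul_assoc, ← Real.exp_add, mul_comm (Real.exp _), mul_assoc, ← Real.exp_add]
  congr 1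
  ring

lemma lintegral_exp_gaussian (m c : ℝ) :
    ∫⁻ x, ENNReal.ofReal (Real.exp (c * x)) ∂(gaussianReal m 1)
      = ENNReal.ofReal (Real.exp (c * m + c ^ 2 / 2)) := by
  rw [gaussianReal_of_var_ne_zero m one_ne_zero,
    lintegral_withDensity_eq_lintegral_mul _ (measurable_gaussianPDF m 1)
      (by exact (Real.measurable_exp.comp (measurable_const_mul c)).ennreal_ofReal)]
  have : ∀ x, (gaussianPDF m 1 * fun x => ENNReal.ofReal (Real.exp (c * x))) x
      = ENNReal.ofReal (Real.exp (c * m + c ^ 2 / 2)) * gaussianPDF (m + c) 1 x := by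
    intro x
    simp only [Pi.mul_apply, gaussianPDF]
    rw [← ENNReal.ofReal_mul (gaussianPDFReal_nonneg m 1 x), gaussianPDFReal_mul_exp,
      ENNReal.ofReal_mul (Real.exp_nonneg _)]
  simp_rw [this]
  rw [lintegral_const_mul _ (measurable_gaussianPDF (m + c) 1),
    lintegral_gaussianPDF_eq_one (m + c) one_ne_zero, mul_one]

lemma toyMix_isProb (y : ℝ) : IsProbabilityMeasure
    ((7 / 10 : ℝ≥0∞) • Measure.dirac y + (3 / 10 : ℝ≥0∞) • Measure.dirac (-y)) := by
  constructor
  simp [Measure.add_apply, Measure.smul_apply]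
  rw [ENNReal.div_add_div_same]
  norm_num
  rw [ENNReal.div_self] <;> norm_num

/-- Conditional feature distribution of the toy model given label `y ∈ {±1}`:
first coordinate equals `y` w.p. 0.7 and `-y` w.p. 0.3; the other coordinates are
independent `N(ηy, 1)`. -/
noncomputable def toyCond (p : ℕ) (η y : ℝ) : Measure (Fin p → ℝ) :=
  Measure.pi fun j =>
    if (j : ℕ) = 0 then (7 / 10 : ℝ≥0∞) • Measure.dirac y + (3 / 10 : ℝ≥0∞) • Measure.dirac (-y)
    else gaussianReal (η * y) 1

lemma toyCond_isProb (p : ℕ) (η y : ℝ) : IsProbabilityMeasure (toyCond p η y) := by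
  unfold toyCond
  haveI : ∀ j : Fin p, IsProbabilityMeasure
      (if (j : ℕ) = 0 then (7 / 10 : ℝ≥0∞) • Measure.dirac y + (3 / 10 : ℝ≥0∞) • Measure.dirac (-y)
        else gaussianReal (η * y) 1) := by
    intro j
    split
    · exact toyMix_isProb y
    · infer_instance
  infer_instance

/-- Joint distribution of `(X, Y)` in the toy model, with `Y` uniform on `{±1}`. -/
noncomputable def toyJoint (p : ℕ) (η : ℝ) : Measure ((Fin p → ℝ) × ℝ) :=
  (1 / 2 : ℝ≥0∞) • ((toyCond p η 1).map (fun x => (x, (1 : ℝ)))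
    + (toyCond p η (-1)).map (fun x => (x, (-1 : ℝ))))

/-- The averaging weight vector `w = (0, 1/(p−1), …, 1/(p−1))`. -/
noncomputable def toyW (p : ℕ) : Fin p → ℝ :=
  fun j => if (j : ℕ) = 0 then 0 else 1 / ((p : ℝ) - 1)

/-- The linear classifier `h(x) = sign(wᵀx)`. -/
noncomputable def toyH (p : ℕ) (x : Fin p → ℝ) : ℝ :=
  if 0 ≤ ∑ j, toyW p j * x j then 1 else -1

lemma measurable_toyT (p : ℕ) :
    Measurable (fun x : Fin p → ℝ => ∑ j : Fin p, if (j : ℕ) = 0 then (0:ℝ) else x j) :=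
  Finset.measurable_sum _ fun j _ => by
    by_cases h : (j : ℕ) = 0 <;> simp [h, measurable_pi_apply]

/-- Chernoff bound for the toy conditional measure. -/
lemma toyCond_chernoff (p : ℕ) (hp : 2 ≤ p) (η y c : ℝ)
    (S : Set (Fin p → ℝ))
    (hS : ∀ x ∈ S, 0 ≤ c * ∑ j : Fin p, (if (j : ℕ) = 0 then (0:ℝ) else x j)) :
    toyCond p η y S ≤ ENNReal.ofReal (Real.exp (c * (η * y) + c ^ 2 / 2)) ^ (p - 1) := by
  haveI : NeZero p := ⟨by omega⟩
  set μ0 : Measure ℝ :=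
    (7 / 10 : ℝ≥0∞) • Measure.dirac y + (3 / 10 : ℝ≥0∞) • Measure.dirac (-y) with hμ0
  haveI : IsProbabilityMeasure μ0 := toyMix_isProb y
  set ν : Fin p → Measure ℝ := fun j => if (j : ℕ) = 0 then μ0 else gaussianReal (η * y) 1 with hν
  haveI hσ : ∀ j, SigmaFinite (ν j) := by
    intro j; rw [hν]; dsimp only; split <;> infer_instance
  set f : (Fin p → ℝ) → ℝ≥0∞ :=
    fun x => ENNReal.ofReal (Real.exp (c * ∑ j : Fin p, if (j : ℕ) = 0 then (0:ℝ) else x j)) with hfdef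
  have hfmeas : Measurable f :=
    (Real.measurable_exp.comp ((measurable_toyT p).const_mul c)).ennreal_ofReal
  have step1 : toyCond p η y S ≤ ∫⁻ x, f x ∂(toyCond p η y) := by
    calc toyCond p η y S ≤ toyCond p η y {x | 1 ≤ f x} := by
          refine measure_mono fun x hx => ?_
          exact ENNReal.one_le_ofReal.2 (Real.one_le_exp (hS x hx))
      _ ≤ ∫⁻ x, f x ∂(toyCond p η y) := by
          simpa using mul_meas_ge_le_lintegral₀ hfmeas.aemeasurable 1
  have hcond : toyCond p η y = Measure.pi ν := rfl
  set g : Fin p → ℝ → ℝ≥0∞ :=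
    fun j t => ENNReal.ofReal (Real.exp (c * if (j : ℕ) = 0 then (0:ℝ) else t)) with hgdef
  have hgmeas : ∀ j, Measurable (g j) := by
    intro j; rw [hgdef]; dsimp only
    by_cases h : (j : ℕ) = 0 <;> simp only [h, if_true, if_false]
    · exact measurable_const
    · exact (Real.measurable_exp.comp (measurable_const_mul c)).ennreal_ofReal
  have hfg : ∀ x, f x = ∏ j, g j (x j) := by
    intro x
    rw [hfdef]; dsimp only
    rw [Finset.mul_sum, Real.exp_sum, ENNReal.ofReal_prod_of_nonneg fun j _ => Real.exp_nonneg _]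
  have step2 : ∫⁻ x, f x ∂(toyCond p η y) = ∏ j, ∫⁻ t, g j t ∂(ν j) := by
    rw [hcond]
    simp_rw [hfg]
    exact lintegral_pi_prod ν hσ g hgmeas
  set K : ℝ≥0∞ := ENNReal.ofReal (Real.exp (c * (η * y) + c ^ 2 / 2)) with hK
  have step3 : ∀ j, ∫⁻ t, g j t ∂(ν j) = if (j : ℕ) = 0 then 1 else K := by
    intro j
    by_cases h : (j : ℕ) = 0
    · simp [hgdef, hν, h, (by simpa using h : j = 0), lintegral_const, measure_univ]
    · simp only [hgdef, hν, h, if_false]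
      exact lintegral_exp_gaussian (η * y) c
  have step4 : (∏ j : Fin p, if (j : ℕ) = 0 then (1:ℝ≥0∞) else K) = K ^ (p - 1) := by
    rw [Finset.prod_ite]
    simp only [Finset.prod_const_one, Finset.prod_const, one_mul]
    congr 1
    have : (Finset.univ.filter fun j : Fin p => ¬ ((j : ℕ) = 0)) = Finset.univ.erase 0 := by
      ext j
      simp
    rw [this, Finset.card_erase_of_mem (Finset.mem_univ _), Finset.card_univ, Fintype.card_fin]
  calc toyCond p η y S ≤ ∫⁻ x, f x ∂(toyCond p η y) := step1
    _ = ∏ j, ∫⁻ t, g j t ∂(ν j) := step2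
    _ = K ^ (p - 1) := by rw [Finset.prod_congr rfl fun j _ => step3 j]; exact step4

/-- Toy-model standard accuracy: `P(h(X) = Y) ≥ 1 − exp(−(p−1)η²/2)`; in particular,
for `δ ∈ (0,1]`, if `η ≥ √(2 log(1/δ)/(p−1))` the accuracy is at least `1 − δ`. -/
theorem stmt10 (p : ℕ) (hp : 2 ≤ p) (η : ℝ) (hη : 0 < η) :
    1 - Real.exp (-((p : ℝ) - 1) * η ^ 2 / 2)
        ≤ (toyJoint p η {z | toyH p z.1 = z.2}).toReal ∧
    ∀ δ : ℝ, 0 < δ → δ ≤ 1 →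
      Real.sqrt (2 * Real.log (1 / δ) / ((p : ℝ) - 1)) ≤ η →
      1 - δ ≤ (toyJoint p η {z | toyH p z.1 = z.2}).toReal := by
  haveI := toyCond_isProb p η 1
  haveI := toyCond_isProb p η (-1)
  have hp1 : (0:ℝ) < (p:ℝ) - 1 := by
    have : (2:ℝ) ≤ (p:ℝ) := by exact_mod_cast hp
    linarith
  set E : Set ((Fin p → ℝ) × ℝ) := {z | toyH p z.1 = z.2} with hEdef
  set Sset : Set (Fin p → ℝ) := {x | 0 ≤ ∑ j, toyW p j * x j} with hSdef
  have hsummeas : Measurable (fun x : Fin p → ℝ => ∑ j, toyW p j * x j) :=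
    Finset.measurable_sum _ fun j _ => measurable_const.mul (measurable_pi_apply j)
  have hSmeas : MeasurableSet Sset := measurableSet_le measurable_const hsummeas
  have hHmeas : Measurable (toyH p) :=
    Measurable.ite (measurableSet_le measurable_const hsummeas) measurable_const measurable_const
  have hE : MeasurableSet E :=
    measurableSet_eq_fun (hHmeas.comp measurable_fst) measurable_snd
  have hpre1 : (fun x : Fin p → ℝ => (x, (1:ℝ))) ⁻¹' E = Sset := by
    ext x
    by_cases h : 0 ≤ ∑ j, toyW p j * x j <;>
      norm_num [hEdef, hSdef, toyH, h]
  have hpre2 : (fun x : Fin p → ℝ => (x, (-1:ℝ))) ⁻¹' E = Ssetᶜ := by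
    ext x
    by_cases h : 0 ≤ ∑ j, toyW p j * x j
    · norm_num [hEdef, hSdef, toyH, h]
    · norm_num [hEdef, hSdef, toyH, h]
      exact lt_of_not_ge h
  have hjoint : toyJoint p η E
      = 2⁻¹ * (toyCond p η 1 Sset + toyCond p η (-1) Ssetᶜ) := by
    rw [toyJoint, Measure.smul_apply, Measure.add_apply,
      Measure.map_apply measurable_prodMk_right hE,
      Measure.map_apply measurable_prodMk_right hE, hpre1, hpre2]
    simp [one_div]
  -- relation between the weighted sum and the plain sum
  have hT : ∀ x : Fin p → ℝ,
      (0 ≤ ∑ j, toyW p j * x j ↔ 0 ≤ ∑ j : Fin p, if (j : ℕ) = 0 then (0:ℝ) else x j) := by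
    intro x
    have hrw : ∑ j, toyW p j * x j
        = ((p:ℝ) - 1)⁻¹ * ∑ j : Fin p, (if (j : ℕ) = 0 then (0:ℝ) else x j) := by
      rw [Finset.mul_sum]
      refine Finset.sum_congr rfl fun j _ => ?_
      by_cases h : (j : ℕ) = 0 <;> simp [toyW, h, one_div]
    rw [hrw]
    constructor
    · intro h
      nlinarith [inv_pos.2 hp1]
    · intro h
      exact mul_nonneg (inv_pos.2 hp1).le h
  set ε : ℝ≥0∞ := ENNReal.ofReal (Real.exp (-((p : ℝ) - 1) * η ^ 2 / 2)) with hεdef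
  have hgen : ENNReal.ofReal (Real.exp (-(η ^ 2) / 2)) ^ (p - 1) = ε := by
    rw [← ENNReal.ofReal_pow (Real.exp_nonneg _), ← Real.exp_nat_mul]
    congr 2
    have hcast : ((p - 1 : ℕ) : ℝ) = (p:ℝ) - 1 := by
      rw [Nat.cast_sub (by omega : 1 ≤ p)]; norm_num
    rw [hcast]; ring
  have h1 : toyCond p η (-1) Sset ≤ ε := by
    have hb := toyCond_chernoff p hp η (-1) η Sset
      (fun x hx => mul_nonneg hη.le ((hT x).1 hx))
    calc toyCond p η (-1) Sset
        ≤ ENNReal.ofReal (Real.exp (η * (η * (-1)) + η ^ 2 / 2)) ^ (p - 1) := hb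
      _ = ε := by rw [show η * (η * (-1)) + η ^ 2 / 2 = -(η ^ 2) / 2 by ring]; exact hgen
  have h2 : toyCond p η 1 Ssetᶜ ≤ ε := by
    have hb := toyCond_chernoff p hp η 1 (-η) Ssetᶜ (fun x hx => by
      have hneg : ¬ (0 ≤ ∑ j : Fin p, if (j : ℕ) = 0 then (0:ℝ) else x j) := fun hc => hx ((hT x).2 hc)
      nlinarith [le_of_not_ge hneg, hη.le])
    calc toyCond p η 1 Ssetᶜ
        ≤ ENNReal.ofReal (Real.exp ((-η) * (η * 1) + (-η) ^ 2 / 2)) ^ (p - 1) := hb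
      _ = ε := by rw [show (-η) * (η * 1) + (-η) ^ 2 / 2 = -(η ^ 2) / 2 by ring]; exact hgen
  set ε' : ℝ := Real.exp (-((p : ℝ) - 1) * η ^ 2 / 2) with hε'def
  have hε'1 : (toyCond p η 1 Ssetᶜ).toReal ≤ ε' := by
    have := ENNReal.toReal_mono ENNReal.ofReal_ne_top h2
    rwa [ENNReal.toReal_ofReal (Real.exp_nonneg _)] at this
  have hε'2 : (toyCond p η (-1) Sset).toReal ≤ ε' := by
    have := ENNReal.toReal_mono ENNReal.ofReal_ne_top h1
    rwa [ENNReal.toReal_ofReal (Real.exp_nonneg _)] at this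
  have hsum1 : (toyCond p η 1 Sset).toReal + (toyCond p η 1 Ssetᶜ).toReal = 1 := by
    rw [← ENNReal.toReal_add (measure_ne_top _ _) (measure_ne_top _ _),
      measure_add_measure_compl hSmeas]
    simp
  have hsum2 : (toyCond p η (-1) Sset).toReal + (toyCond p η (-1) Ssetᶜ).toReal = 1 := by
    rw [← ENNReal.toReal_add (measure_ne_top _ _) (measure_ne_top _ _),
      measure_add_measure_compl hSmeas]
    simp
  have hkey : (toyJoint p η E).toReal
      = 2⁻¹ * ((toyCond p η 1 Sset).toReal + (toyCond p η (-1) Ssetᶜ).toReal) := by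
    rw [hjoint, ENNReal.toReal_mul,
      ENNReal.toReal_add (measure_ne_top _ _) (measure_ne_top _ _)]
    norm_num
  have hmain : 1 - ε' ≤ (toyJoint p η E).toReal := by
    rw [hkey]
    linarith
  refine ⟨hmain, fun δ hδpos hδ1 hηδ => ?_⟩
  have hLnonneg : 0 ≤ Real.log (1 / δ) :=
    Real.log_nonneg (one_le_one_div hδpos hδ1)
  have hargnn : 0 ≤ 2 * Real.log (1 / δ) / ((p:ℝ) - 1) := by positivity
  have hsq : 2 * Real.log (1 / δ) / ((p:ℝ) - 1) ≤ η ^ 2 := by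
    have := pow_le_pow_left₀ (Real.sqrt_nonneg _) hηδ 2
    rwa [Real.sq_sqrt hargnn] at this
  have hεδ : ε' ≤ δ := by
    rw [hε'def]
    have h2L : 2 * Real.log (1 / δ) ≤ η ^ 2 * ((p:ℝ) - 1) := (div_le_iff₀ hp1).1 hsq
    have hexp : -((p:ℝ) - 1) * η ^ 2 / 2 ≤ Real.log δ := by
      rw [one_div, Real.log_inv] at h2L
      linarith
    calc Real.exp (-((p:ℝ) - 1) * η ^ 2 / 2) ≤ Real.exp (Real.log δ) := Real.exp_monotone hexp
      _ = δ := Real.exp_log hδpos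
  linarith
end

section
/- Mutual information bound for Gaussian mixtures: Let Y be uniform on {±1} and X | Y ∼ N(ηY, 1) for η > 0. Then the mutual information I(X;Y) = H(X) − H(X|Y) equals η² − r where r = (2/(√(2π)·η))·e^{−η²/2}·∫₀^∞ e^{−z²/(2η²)}·cosh(z)·log(cosh(z)) dz ≥ 0. In particular I(X;Y) ≤ η². -/
open MeasureTheory ProbabilityTheory Real Set Filter

namespace Stmt13Aux

lemma integrable_sq_exp_half : Integrable (fun x : ℝ => x^2 * Real.exp (-x^2/2)) := by
  have h := integrable_rpow_mul_exp_neg_mul_sq (b := 1/2) (by norm_num) (s := 2) (by norm_num)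
  have e : (fun x : ℝ => x ^ (2:ℝ) * Real.exp (-(1/2) * x^2))
      = fun x : ℝ => x^2 * Real.exp (-x^2/2) := by
    funext x
    rw [show ((2:ℝ)) = ((2:ℕ):ℝ) by norm_num, Real.rpow_natCast]
    congr 1
    congr 1
    ring
  rwa [e] at h

lemma integrable_exp_half : Integrable (fun x : ℝ => Real.exp (-x^2/2)) := by
  have h := integrable_exp_neg_mul_sq (b := 1/2) (by norm_num)
  have e : (fun x : ℝ => Real.exp (-(1/2) * x^2)) = fun x : ℝ => Real.exp (-x^2/2) := by
    funext x; congr 1; ring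
  rwa [e] at h

lemma tendsto_mul_exp_half : Tendsto (fun x : ℝ => -x * Real.exp (-x^2/2)) atTop (nhds 0) := by
  have h := rpow_mul_exp_neg_mul_sq_isLittleO_exp_neg (b := 1/2) (by norm_num) 1
  have h2 : Tendsto (fun x : ℝ => Real.exp (-(1/2) * x)) atTop (nhds 0) := by
    have hh : Tendsto (fun x : ℝ => (1/2 : ℝ) * x) atTop atTop :=
      Tendsto.const_mul_atTop (by norm_num) tendsto_id
    have h := Real.tendsto_exp_neg_atTop_nhds_zero.comp hh
    simp only [Function.comp_def] at h
    convert h using 2 with x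
    ring
  have h3 : Tendsto (fun x : ℝ => x ^ (1:ℝ) * Real.exp (-(1/2) * x^2)) atTop (nhds 0) :=
    h.isBigO.trans_tendsto h2
  have h4 : Tendsto (fun x : ℝ => x * Real.exp (-x^2/2)) atTop (nhds 0) := by
    refine h3.congr' ?_
    filter_upwards [eventually_ge_atTop (0:ℝ)] with x hx
    rw [Real.rpow_one]
    congr 1
    congr 1
    ring
  simpa using h4.neg

lemma int_sq_exp_half_Ioi : ∫ x in Ioi (0:ℝ), x^2 * Real.exp (-x^2/2)
    = ∫ x in Ioi (0:ℝ), Real.exp (-x^2/2) := by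
  have hd : ∀ x ∈ Ici (0:ℝ), HasDerivAt (fun t : ℝ => -t * Real.exp (-t^2/2))
      (x^2 * Real.exp (-x^2/2) - Real.exp (-x^2/2)) x := by
    intro x _
    have h1 : HasDerivAt (fun t : ℝ => -t^2/2) (-x) x := by
      have := ((hasDerivAt_pow 2 x).neg.div_const 2)
      simpa using this.congr_deriv (by push_cast; ring)
    have h2 : HasDerivAt (fun t : ℝ => Real.exp (-t^2/2)) (Real.exp (-x^2/2) * (-x)) x :=
      (Real.hasDerivAt_exp _).comp x h1
    have := ((hasDerivAt_id x).neg.mul h2)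
    exact this.congr_deriv (by simp only [Pi.neg_apply, id_eq]; ring)
  have hint : IntegrableOn (fun x : ℝ => x^2 * Real.exp (-x^2/2) - Real.exp (-x^2/2))
      (Ioi 0) := (integrable_sq_exp_half.sub integrable_exp_half).integrableOn
  have key := integral_Ioi_of_hasDerivAt_of_tendsto' hd hint tendsto_mul_exp_half
  rw [integral_sub integrable_sq_exp_half.integrableOn integrable_exp_half.integrableOn] at key
  simp only [neg_zero, zero_mul, mul_zero, neg_mul] at key
  linarith [key]

lemma int_exp_half : ∫ x : ℝ, Real.exp (-x^2/2) = Real.sqrt (2*π) := by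
  have h := integral_gaussian (1/2 : ℝ)
  rw [show (π / (1/2) : ℝ) = 2*π by ring] at h
  rw [← h]
  congr 1 with x
  congr 1
  ring

lemma int_id_exp_half : ∫ x : ℝ, x * Real.exp (-x^2/2) = 0 := by
  have h := integral_neg_eq_self (fun x : ℝ => x * Real.exp (-x^2/2)) volume
  simp only [neg_sq, neg_mul] at h
  rw [integral_neg] at h
  linarith [h]

lemma int_sq_exp_half : ∫ x : ℝ, x^2 * Real.exp (-x^2/2) = Real.sqrt (2*π) := by
  have h1 : ∫ x : ℝ, x^2 * Real.exp (-x^2/2)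
      = 2 * ∫ x in Ioi (0:ℝ), x^2 * Real.exp (-x^2/2) := by
    rw [← integral_comp_abs (f := fun x : ℝ => x^2 * Real.exp (-x^2/2))]
    congr 1 with x
    simp [sq_abs]
  have h2 : ∫ x : ℝ, Real.exp (-x^2/2)
      = 2 * ∫ x in Ioi (0:ℝ), Real.exp (-x^2/2) := by
    rw [← integral_comp_abs (f := fun x : ℝ => Real.exp (-x^2/2))]
    congr 1 with x
    simp [sq_abs]
  rw [h1, int_sq_exp_half_Ioi, ← h2, int_exp_half]

lemma sqrt_two_pi_pos : 0 < Real.sqrt (2*π) := Real.sqrt_pos.2 (by positivity)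

lemma gauss_eq (μ : ℝ) (x : ℝ) :
    gaussianPDFReal μ 1 x = (Real.sqrt (2*π))⁻¹ * Real.exp (-(x-μ)^2/2) := by
  simp [gaussianPDFReal]

lemma integrable_id_exp_half : Integrable (fun x : ℝ => x * Real.exp (-x^2/2)) := by
  have h := integrable_mul_exp_neg_mul_sq (b := 1/2) (by norm_num)
  have e : (fun x : ℝ => x * Real.exp (-(1/2) * x^2)) = fun x : ℝ => x * Real.exp (-x^2/2) := by
    funext x; congr 1; ring
  rwa [e] at h

lemma shifted_eq (μ : ℝ) :
    (fun y : ℝ => (y+μ)^2 * ((Real.sqrt (2*π))⁻¹ * Real.exp (-y^2/2)))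
      = fun y : ℝ => ((Real.sqrt (2*π))⁻¹ * (y^2 * Real.exp (-y^2/2)))
        + ((2*μ) * (Real.sqrt (2*π))⁻¹) * (y * Real.exp (-y^2/2))
        + (μ^2 * (Real.sqrt (2*π))⁻¹) * Real.exp (-y^2/2) := by
  funext y; ring

lemma integrable_shifted (μ : ℝ) :
    Integrable (fun y : ℝ => (y+μ)^2 * ((Real.sqrt (2*π))⁻¹ * Real.exp (-y^2/2))) := by
  rw [shifted_eq]
  exact ((integrable_sq_exp_half.const_mul _).add
    (integrable_id_exp_half.const_mul _)).add (integrable_exp_half.const_mul _)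

lemma int_shifted (μ : ℝ) :
    ∫ y : ℝ, (y+μ)^2 * ((Real.sqrt (2*π))⁻¹ * Real.exp (-y^2/2)) = μ^2 + 1 := by
  rw [shifted_eq]
  rw [integral_add (f := fun y : ℝ => ((Real.sqrt (2*π))⁻¹ * (y^2 * Real.exp (-y^2/2)))
        + ((2*μ) * (Real.sqrt (2*π))⁻¹) * (y * Real.exp (-y^2/2)))
      (g := fun y : ℝ => (μ^2 * (Real.sqrt (2*π))⁻¹) * Real.exp (-y^2/2))
      ((integrable_sq_exp_half.const_mul _).add (integrable_id_exp_half.const_mul _))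
      (integrable_exp_half.const_mul _),
    integral_add (f := fun y : ℝ => ((Real.sqrt (2*π))⁻¹ * (y^2 * Real.exp (-y^2/2))))
      (g := fun y : ℝ => ((2*μ) * (Real.sqrt (2*π))⁻¹) * (y * Real.exp (-y^2/2)))
      (integrable_sq_exp_half.const_mul _) (integrable_id_exp_half.const_mul _),
    integral_const_mul, integral_const_mul, integral_const_mul,
    int_sq_exp_half, int_id_exp_half, int_exp_half]
  have h1 : Real.sqrt (π*2) ≠ 0 := by rw [mul_comm]; exact sqrt_two_pi_pos.ne'
  rw [inv_mul_cancel₀ sqrt_two_pi_pos.ne']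
  field_simp
  ring

lemma integrable_sq_mul_gauss (μ : ℝ) :
    Integrable (fun x : ℝ => x^2 * gaussianPDFReal μ 1 x) := by
  have h := (integrable_shifted μ).comp_sub_right μ
  refine h.congr (ae_of_all _ fun x => ?_)
  simp only [gauss_eq]
  ring_nf

lemma int_sq_mul_gauss (μ : ℝ) :
    ∫ x : ℝ, x^2 * gaussianPDFReal μ 1 x = μ^2 + 1 := by
  rw [show (fun x : ℝ => x^2 * gaussianPDFReal μ 1 x)
      = fun x : ℝ => (fun y : ℝ => (y+μ)^2 * ((Real.sqrt (2*π))⁻¹ * Real.exp (-y^2/2))) (x - μ)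
      by funext x; simp only [gauss_eq]; ring_nf]
  exact (integral_sub_right_eq_self _ μ).trans (int_shifted μ)

lemma cosh_le_exp_abs' (x : ℝ) : Real.cosh x ≤ Real.exp |x| := by
  rw [Real.cosh_eq]
  have h1 : Real.exp x ≤ Real.exp |x| := Real.exp_le_exp.2 (le_abs_self x)
  have h2 : Real.exp (-x) ≤ Real.exp |x| := Real.exp_le_exp.2 (neg_le_abs x)
  linarith

lemma log_cosh_nonneg (x : ℝ) : 0 ≤ Real.log (Real.cosh x) :=
  Real.log_nonneg (Real.one_le_cosh x)

lemma log_cosh_le_abs (x : ℝ) : Real.log (Real.cosh x) ≤ |x| :=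
  (Real.log_le_iff_le_exp (Real.cosh_pos x)).2 (cosh_le_exp_abs' x)

lemma f_eq (η : ℝ) (x : ℝ) :
    (gaussianPDFReal η 1 x + gaussianPDFReal (-η) 1 x) / 2
      = (Real.sqrt (2*π))⁻¹ * (Real.exp (-(x^2+η^2)/2) * Real.cosh (η*x)) := by
  have e1 : Real.exp (-(x-η)^2/2) = Real.exp (-(x^2+η^2)/2) * Real.exp (η*x) := by
    rw [← Real.exp_add]; congr 1; ring
  have e2 : Real.exp (-(x-(-η))^2/2) = Real.exp (-(x^2+η^2)/2) * Real.exp (-(η*x)) := by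
    rw [← Real.exp_add]; congr 1; ring
  rw [gauss_eq, gauss_eq, e1, e2, Real.cosh_eq]
  ring

end Stmt13Aux

open Stmt13Aux

/-- Mutual information bound for the balanced Gaussian mixture: with `X | Y ∼ N(ηY, 1)`
and `Y` uniform on `{±1}`, the mutual information `I(X;Y) = H(X) − H(X|Y)` equals
`η² − r` with `r ≥ 0` as below; in particular `I(X;Y) ≤ η²`. -/
theorem stmt13 (η : ℝ) (hη : 0 < η) :
    let f : ℝ → ℝ := fun x => (gaussianPDFReal η 1 x + gaussianPDFReal (-η) 1 x) / 2
    let HX : ℝ := -∫ x, f x * Real.log (f x)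
    let HXgivenY : ℝ := Real.log (Real.sqrt (2 * π * Real.exp 1))
    let r : ℝ := 2 / (Real.sqrt (2 * π) * η) * Real.exp (-η ^ 2 / 2) *
      ∫ z in Set.Ioi (0 : ℝ), Real.exp (-z ^ 2 / (2 * η ^ 2)) *
        Real.cosh z * Real.log (Real.cosh z)
    0 ≤ r ∧ HX - HXgivenY = η ^ 2 - r ∧ HX - HXgivenY ≤ η ^ 2 := by
  intro f HX HXgivenY r
  have hπ : (0:ℝ) < 2*π := by positivity
  set c : ℝ := (Real.sqrt (2*π))⁻¹ with hc_def
  have hc_pos : 0 < c := inv_pos.2 sqrt_two_pi_pos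
  -- r ≥ 0
  have hr_nonneg : 0 ≤ r := by
    have hI : 0 ≤ ∫ z in Set.Ioi (0:ℝ), Real.exp (-z ^ 2 / (2 * η ^ 2)) *
        Real.cosh z * Real.log (Real.cosh z) := by
      refine setIntegral_nonneg measurableSet_Ioi fun z _ => ?_
      have := log_cosh_nonneg z
      have := (Real.cosh_pos z).le
      positivity
    have hpre : 0 ≤ 2 / (Real.sqrt (2 * π) * η) * Real.exp (-η ^ 2 / 2) := by
      have := sqrt_two_pi_pos
      positivity
    exact mul_nonneg hpre hI
  -- basic facts about f
  have hf_eq : ∀ x, f x = c * (Real.exp (-(x^2+η^2)/2) * Real.cosh (η*x)) := fun x => f_eq η x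
  have hf_pos : ∀ x, 0 < f x := fun x => by
    rw [hf_eq x]
    have := Real.cosh_pos (η*x)
    positivity
  have hInt_f : Integrable f :=
    ((integrable_gaussianPDFReal η 1).add (integrable_gaussianPDFReal (-η) 1)).div_const 2
  have hmeas_f : Measurable f :=
    ((measurable_gaussianPDFReal η 1).add (measurable_gaussianPDFReal (-η) 1)).div_const 2
  have hint_f : ∫ x, f x = 1 := by
    show ∫ x, (gaussianPDFReal η 1 x + gaussianPDFReal (-η) 1 x) / 2 = 1
    rw [integral_div, integral_add (integrable_gaussianPDFReal η 1)
      (integrable_gaussianPDFReal (-η) 1),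
      integral_gaussianPDFReal_eq_one η one_ne_zero,
      integral_gaussianPDFReal_eq_one (-η) one_ne_zero]
    norm_num
  -- second moment
  have hInt_sqf : Integrable (fun x => x^2 * f x) := by
    have h := ((integrable_sq_mul_gauss η).add (integrable_sq_mul_gauss (-η))).div_const 2
    refine h.congr (ae_of_all _ fun x => ?_)
    show (x ^ 2 * gaussianPDFReal η 1 x + x ^ 2 * gaussianPDFReal (-η) 1 x) / 2 = x ^ 2 * f x
    show _ = x ^ 2 * ((gaussianPDFReal η 1 x + gaussianPDFReal (-η) 1 x) / 2)
    ring
  have hint_sqf : ∫ x, x^2 * f x = η^2 + 1 := by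
    have he : (fun x => x^2 * f x)
        = fun x => (x ^ 2 * gaussianPDFReal η 1 x + x ^ 2 * gaussianPDFReal (-η) 1 x) / 2 := by
      funext x
      show x ^ 2 * ((gaussianPDFReal η 1 x + gaussianPDFReal (-η) 1 x) / 2) = _
      ring
    rw [he, integral_div, integral_add (integrable_sq_mul_gauss η) (integrable_sq_mul_gauss (-η)),
      int_sq_mul_gauss, int_sq_mul_gauss]
    ring
  -- integrability of |x| * f x
  have hInt_absf : Integrable (fun x => |x| * f x) := by
    refine (hInt_sqf.add hInt_f).mono'
      ((continuous_abs.measurable.mul hmeas_f).aestronglyMeasurable) (ae_of_all _ fun x => ?_)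
    have h1 : |x| ≤ x^2 + 1 := by nlinarith [abs_nonneg x, sq_abs x]
    have h2 : 0 < f x := hf_pos x
    rw [Real.norm_eq_abs, abs_of_nonneg (by positivity)]
    simp only [Pi.add_apply]
    nlinarith
  -- integrability of f * log cosh
  have hInt_flc : Integrable (fun x => f x * Real.log (Real.cosh (η*x))) := by
    have hcont : Continuous fun x : ℝ => Real.log (Real.cosh (η*x)) :=
      (Real.continuous_cosh.comp (continuous_const.mul continuous_id)).log
        (fun x => (Real.cosh_pos _).ne')
    refine ((hInt_absf.const_mul η)).mono'
      ((hmeas_f.mul hcont.measurable).aestronglyMeasurable) (ae_of_all _ fun x => ?_)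
    have h2 : 0 < f x := hf_pos x
    have h3 : 0 ≤ Real.log (Real.cosh (η*x)) := log_cosh_nonneg _
    have h4 : Real.log (Real.cosh (η*x)) ≤ |η*x| := log_cosh_le_abs _
    rw [Real.norm_eq_abs, abs_of_nonneg (by positivity)]
    calc f x * Real.log (Real.cosh (η*x)) ≤ f x * |η*x| := by nlinarith
      _ = η * (|x| * f x) := by rw [abs_mul, abs_of_pos hη]; ring
  -- pointwise log expansion
  have hlog : ∀ x, f x * Real.log (f x)
      = (Real.log c) * f x + ((-(1:ℝ)/2) * (x^2 * f x) + (-(η^2)/2) * f x)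
        + f x * Real.log (Real.cosh (η*x)) := by
    intro x
    have hcosh : (0:ℝ) < Real.cosh (η*x) := Real.cosh_pos _
    have hfe := hf_eq x
    have hlf : Real.log (f x)
        = Real.log c + (-(x^2+η^2)/2) + Real.log (Real.cosh (η*x)) := by
      rw [hfe, Real.log_mul hc_pos.ne' (by positivity),
        Real.log_mul (Real.exp_ne_zero _) hcosh.ne', Real.log_exp]
      ring
    rw [hlf]
    ring
  -- value of the entropy integral
  have hint_flogf : ∫ x, f x * Real.log (f x)
      = Real.log c - (1 + 2*η^2)/2 + ∫ x, f x * Real.log (Real.cosh (η*x)) := by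
    rw [show (fun x => f x * Real.log (f x))
        = fun x => ((Real.log c) * f x + ((-(1:ℝ)/2) * (x^2 * f x) + (-(η^2)/2) * f x))
          + f x * Real.log (Real.cosh (η*x)) from funext hlog]
    rw [integral_add (f := fun x => (Real.log c) * f x
          + ((-(1:ℝ)/2) * (x^2 * f x) + (-(η^2)/2) * f x))
        (g := fun x => f x * Real.log (Real.cosh (η*x)))
        ((hInt_f.const_mul _).add ((hInt_sqf.const_mul _).add (hInt_f.const_mul _))) hInt_flc,
      integral_add (f := fun x => (Real.log c) * f x)
        (g := fun x => (-(1:ℝ)/2) * (x^2 * f x) + (-(η^2)/2) * f x)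
        (hInt_f.const_mul _) ((hInt_sqf.const_mul _).add (hInt_f.const_mul _)),
      integral_add (f := fun x => (-(1:ℝ)/2) * (x^2 * f x))
        (g := fun x => (-(η^2)/2) * f x)
        (hInt_sqf.const_mul _) (hInt_f.const_mul _),
      integral_const_mul, integral_const_mul, integral_const_mul, hint_f, hint_sqf]
    ring
  -- HXgivenY value
  have hHXY : HXgivenY = Real.log (2*π) / 2 + 1/2 := by
    show Real.log (Real.sqrt (2 * π * Real.exp 1)) = _
    rw [Real.log_sqrt (by positivity), Real.log_mul hπ.ne' (Real.exp_ne_zero 1), Real.log_exp]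
    ring
  have hlogc : Real.log c = -(Real.log (2*π) / 2) := by
    rw [hc_def, Real.log_inv, Real.log_sqrt hπ.le]
  -- evenness: R = 2 ∫_{Ioi 0}
  have hR_even : ∫ x, f x * Real.log (Real.cosh (η*x))
      = 2 * ∫ x in Ioi (0:ℝ), f x * Real.log (Real.cosh (η*x)) := by
    rw [← integral_comp_abs (f := fun x => f x * Real.log (Real.cosh (η*x)))]
    congr 1 with x
    have h1 : Real.cosh (η * |x|) = Real.cosh (η * x) := by
      rw [show η * |x| = |η * x| by rw [abs_mul, abs_of_pos hη], Real.cosh_abs]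
    have h2 : f |x| = f x := by
      rw [hf_eq, hf_eq, sq_abs, h1]
    rw [h2, h1]
  -- pointwise on Ioi: f x * log cosh = const * (exp(-x²/2) cosh log cosh)
  have hpt : ∀ x : ℝ, f x * Real.log (Real.cosh (η*x))
      = (c * Real.exp (-η^2/2)) *
        (Real.exp (-x^2/2) * Real.cosh (η*x) * Real.log (Real.cosh (η*x))) := by
    intro x
    rw [hf_eq x, show (-(x^2+η^2)/2 : ℝ) = -x^2/2 + -η^2/2 by ring, Real.exp_add]
    ring
  -- substitution z = η x
  have hsub : ∫ z in Ioi (0:ℝ), Real.exp (-z ^ 2 / (2 * η ^ 2)) *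
        Real.cosh z * Real.log (Real.cosh z)
      = η * ∫ x in Ioi (0:ℝ),
          Real.exp (-x^2/2) * Real.cosh (η*x) * Real.log (Real.cosh (η*x)) := by
    have h := integral_comp_mul_left_Ioi
      (g := fun z => Real.exp (-z ^ 2 / (2 * η ^ 2)) * Real.cosh z * Real.log (Real.cosh z))
      0 hη
    rw [mul_zero] at h
    simp only [smul_eq_mul] at h
    have he : ∫ x in Ioi (0:ℝ), Real.exp (-(η*x) ^ 2 / (2 * η ^ 2)) *
          Real.cosh (η*x) * Real.log (Real.cosh (η*x))
        = ∫ x in Ioi (0:ℝ), Real.exp (-x^2/2) * Real.cosh (η*x) * Real.log (Real.cosh (η*x)) := by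
      refine setIntegral_congr_fun measurableSet_Ioi fun x _ => ?_
      congr 2
      rw [mul_pow]
      field_simp
    rw [he] at h
    rw [h, ← mul_assoc, mul_inv_cancel₀ hη.ne', one_mul]
  -- R = r
  have hR : ∫ x, f x * Real.log (Real.cosh (η*x)) = r := by
    rw [hR_even]
    rw [show (fun x => f x * Real.log (Real.cosh (η*x)))
        = fun x => (c * Real.exp (-η^2/2)) *
          (Real.exp (-x^2/2) * Real.cosh (η*x) * Real.log (Real.cosh (η*x))) from funext hpt]
    rw [integral_const_mul]
    show 2 * (c * Real.exp (-η ^ 2 / 2) * ∫ x in Ioi (0:ℝ),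
        Real.exp (-x^2/2) * Real.cosh (η*x) * Real.log (Real.cosh (η*x)))
      = 2 / (Real.sqrt (2 * π) * η) * Real.exp (-η ^ 2 / 2) * ∫ z in Set.Ioi (0 : ℝ),
          Real.exp (-z ^ 2 / (2 * η ^ 2)) * Real.cosh z * Real.log (Real.cosh z)
    rw [hsub, hc_def]
    field_simp
  -- final
  have hmain : HX - HXgivenY = η ^ 2 - r := by
    show (-∫ x, f x * Real.log (f x)) - HXgivenY = η ^ 2 - r
    rw [hint_flogf, hR, hHXY, hlogc]
    ring
  exact ⟨hr_nonneg, hmain, by linarith [hr_nonneg, hmain.le]⟩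
end
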